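/- For the lognormal distribution (Q(p)=exp(z_p) with z_p=Φ⁻¹(p)), the curve L₂(p) = p·exp(2z_{p/2}) satisfies L₂''(p) = L₂(p)·[2/(p·φ(z_{p/2})) + (2+z_{p/2})/(2φ²(z_{p/2}))], where φ is the standard normal density; hence L₂ is convex at p whenever 4φ(z_{p/2}) + p(2+z_{p/2}) > 0. -/

import Mathlib

open Set Real MeasureTheory

section aux

variable {φ Φ z : ℝ → ℝ}

lemma aux_phi_pos (hφ : ∀ x, φ x = Real.exp (-(x ^ 2) / 2) / Real.sqrt (2 * Real.pi)) (x : ℝ) :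
    0 < φ x := by
  rw [hφ]
  positivity

lemma aux_phi_cont (hφ : ∀ x, φ x = Real.exp (-(x ^ 2) / 2) / Real.sqrt (2 * Real.pi)) :
    Continuous φ := by
  have : φ = fun x => Real.exp (-(x ^ 2) / 2) / Real.sqrt (2 * Real.pi) := funext hφ
  rw [this]
  fun_prop

lemma aux_phi_deriv (hφ : ∀ x, φ x = Real.exp (-(x ^ 2) / 2) / Real.sqrt (2 * Real.pi)) (x : ℝ) :
    HasDerivAt φ (-x * φ x) x := by
  have h1 : HasDerivAt (fun x : ℝ => -(x ^ 2) / 2) (-x) x := by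
    have := ((hasDerivAt_pow 2 x).fun_neg).div_const 2
    refine this.congr_deriv ?_
    ring
  have h2 : HasDerivAt (fun x : ℝ => Real.exp (-(x ^ 2) / 2) / Real.sqrt (2 * Real.pi))
      (Real.exp (-(x ^ 2) / 2) * (-x) / Real.sqrt (2 * Real.pi)) x :=
    (h1.exp).div_const _
  have hfun : φ = fun x => Real.exp (-(x ^ 2) / 2) / Real.sqrt (2 * Real.pi) := funext hφ
  have key : HasDerivAt φ (Real.exp (-(x ^ 2) / 2) * (-x) / Real.sqrt (2 * Real.pi)) x := by
    rw [hfun]; exact h2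
  convert key using 1
  rw [hφ]
  ring

lemma aux_phi_integrable
    (hφ : ∀ x, φ x = Real.exp (-(x ^ 2) / 2) / Real.sqrt (2 * Real.pi)) :
    Integrable φ := by
  have : φ = fun x => Real.exp (-(2⁻¹ : ℝ) * x ^ 2) * (Real.sqrt (2 * Real.pi))⁻¹ := by
    funext x
    rw [hφ]
    ring_nf
  rw [this]
  exact (integrable_exp_neg_mul_sq (by norm_num)).mul_const _

lemma aux_Phi_deriv (hφ : ∀ x, φ x = Real.exp (-(x ^ 2) / 2) / Real.sqrt (2 * Real.pi))
    (hΦ : ∀ x, Φ x = ∫ t in Set.Iic x, φ t) (x : ℝ) :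
    HasDerivAt Φ (φ x) x := by
  have hint := aux_phi_integrable hφ
  have hcont := aux_phi_cont hφ
  have heq : Φ = fun u => (∫ t in Set.Iic (0 : ℝ), φ t) + ∫ t in (0:ℝ)..u, φ t := by
    funext u
    rw [hΦ u]
    have := intervalIntegral.integral_Iic_sub_Iic (μ := volume)
      (hint.integrableOn) (hint.integrableOn) (a := 0) (b := u)
    linarith
  rw [heq]
  have h := intervalIntegral.integral_hasDerivAt_right (f := φ) (a := 0) (b := x)
    (hcont.intervalIntegrable 0 x) (hcont.stronglyMeasurableAtFilter _ _)
    hcont.continuousAt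
  exact h.const_add _

lemma aux_Phi_mono (hφ : ∀ x, φ x = Real.exp (-(x ^ 2) / 2) / Real.sqrt (2 * Real.pi))
    (hΦ : ∀ x, Φ x = ∫ t in Set.Iic x, φ t) :
    StrictMono Φ := by
  intro a b hab
  have hint := aux_phi_integrable hφ
  have hcont := aux_phi_cont hφ
  have h := intervalIntegral.integral_Iic_sub_Iic (μ := volume)
    (hint.integrableOn) (hint.integrableOn) (a := a) (b := b)
  have hpos : 0 < ∫ x in a..b, φ x :=
    intervalIntegral.intervalIntegral_pos_of_pos (hcont.intervalIntegrable a b)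
      (aux_phi_pos hφ) hab
  rw [hΦ a, hΦ b]
  linarith

lemma aux_z_contAt (hφ : ∀ x, φ x = Real.exp (-(x ^ 2) / 2) / Real.sqrt (2 * Real.pi))
    (hΦ : ∀ x, Φ x = ∫ t in Set.Iic x, φ t)
    (hz : ∀ p ∈ Set.Ioo (0 : ℝ) 1, Φ (z p) = p) {p : ℝ} (hp : p ∈ Set.Ioo (0 : ℝ) 1) :
    ContinuousAt z p := by
  have hmono := aux_Phi_mono hφ hΦ
  rw [Metric.continuousAt_iff]
  intro ε hε
  set a := Φ (z p - ε) with ha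
  set b := Φ (z p + ε) with hb
  have hap : a < p := by
    rw [← hz p hp]; exact hmono (by linarith)
  have hpb : p < b := by
    rw [← hz p hp]; exact hmono (by linarith)
  obtain ⟨hp0, hp1⟩ := hp
  set δ := min (min (p - a) (b - p)) (min p (1 - p)) with hδdef
  have hδ1 : δ ≤ p - a := le_trans (min_le_left _ _) (min_le_left _ _)
  have hδ2 : δ ≤ b - p := le_trans (min_le_left _ _) (min_le_right _ _)
  have hδ3 : δ ≤ p := le_trans (min_le_right _ _) (min_le_left _ _)
  have hδ4 : δ ≤ 1 - p := le_trans (min_le_right _ _) (min_le_right _ _)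
  have hδ0 : 0 < δ :=
    lt_min (lt_min (by linarith) (by linarith)) (lt_min hp0 (by linarith))
  refine ⟨δ, hδ0, fun {q} hq => ?_⟩
  rw [Real.dist_eq] at hq ⊢
  rw [abs_sub_lt_iff] at hq
  obtain ⟨hq1, hq2⟩ := hq
  have hqa : a < q := by linarith
  have hqb : q < b := by linarith
  have hq0 : 0 < q := by linarith
  have hq1' : q < 1 := by linarith
  have hΦq : Φ (z q) = q := hz q ⟨hq0, hq1'⟩
  have h1 : z q < z p + ε := by
    by_contra h
    push_neg at h
    have := hmono.le_iff_le.mpr h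
    rw [hΦq, ← hb] at this
    linarith
  have h2 : z p - ε < z q := by
    by_contra h
    push_neg at h
    have := hmono.le_iff_le.mpr h
    rw [hΦq, ← ha] at this
    linarith
  rw [abs_sub_lt_iff]
  constructor <;> linarith

lemma aux_z_deriv (hφ : ∀ x, φ x = Real.exp (-(x ^ 2) / 2) / Real.sqrt (2 * Real.pi))
    (hΦ : ∀ x, Φ x = ∫ t in Set.Iic x, φ t)
    (hz : ∀ p ∈ Set.Ioo (0 : ℝ) 1, Φ (z p) = p) {p : ℝ} (hp : p ∈ Set.Ioo (0 : ℝ) 1) :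
    HasDerivAt z (φ (z p))⁻¹ p := by
  refine HasDerivAt.of_local_left_inverse (aux_z_contAt hφ hΦ hz hp)
    (aux_Phi_deriv hφ hΦ (z p)) (ne_of_gt (aux_phi_pos hφ _)) ?_
  filter_upwards [isOpen_Ioo.mem_nhds hp] with q hq
  exact hz q hq

end aux

/-- For the standard lognormal distribution (`Q(p) = exp(z_p)`, `z_p = Φ⁻¹(p)`), the curve
`L₂(p) = p·exp(2 z_{p/2})` satisfies
`L₂''(p) = L₂(p)·(2/(p φ(z_{p/2})) + (2 + z_{p/2})/(2 φ(z_{p/2})²))`,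
where `φ` is the standard normal density; hence `L₂` has positive second derivative at `p`
(is convex at `p`) whenever `4 φ(z_{p/2}) + p(2 + z_{p/2}) > 0`. -/
theorem stmt_16 (φ Φ z : ℝ → ℝ)
    (hφ : ∀ x, φ x = Real.exp (-(x ^ 2) / 2) / Real.sqrt (2 * Real.pi))
    (hΦ : ∀ x, Φ x = ∫ t in Set.Iic x, φ t)
    (hz : ∀ p ∈ Set.Ioo (0 : ℝ) 1, Φ (z p) = p) :
    ∀ p ∈ Set.Ioo (0 : ℝ) 1,
      (deriv (deriv (fun p : ℝ => p * Real.exp (2 * z (p / 2)))) p =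
        p * Real.exp (2 * z (p / 2)) *
          (2 / (p * φ (z (p / 2))) + (2 + z (p / 2)) / (2 * (φ (z (p / 2))) ^ 2))) ∧
      (0 < 4 * φ (z (p / 2)) + p * (2 + z (p / 2)) →
        0 < deriv (deriv (fun p : ℝ => p * Real.exp (2 * z (p / 2)))) p) := by
  -- derivative of the inner z(p/2)
  have hhalf : ∀ p ∈ Set.Ioo (0:ℝ) 1, p / 2 ∈ Set.Ioo (0:ℝ) 1 := by
    rintro p ⟨h0, h1⟩
    exact ⟨by linarith, by linarith⟩
  have hu : ∀ p ∈ Set.Ioo (0:ℝ) 1,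
      HasDerivAt (fun q : ℝ => z (q / 2)) ((φ (z (p / 2)))⁻¹ * (1 / 2)) p := by
    intro p hp
    have hz' := aux_z_deriv hφ hΦ hz (hhalf p hp)
    have hi : HasDerivAt (fun q : ℝ => q / 2) (1 / 2) p := by
      simpa using (hasDerivAt_id p).div_const 2
    exact hz'.comp p hi
  -- first derivative of L₂ on Ioo 0 1
  set D1 : ℝ → ℝ := fun p => Real.exp (2 * z (p / 2)) * (1 + p * (φ (z (p / 2)))⁻¹) with hD1
  have hL1 : ∀ p ∈ Set.Ioo (0:ℝ) 1,
      HasDerivAt (fun q : ℝ => q * Real.exp (2 * z (q / 2))) (D1 p) p := by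
    intro p hp
    have hE : HasDerivAt (fun q : ℝ => Real.exp (2 * z (q / 2)))
        (Real.exp (2 * z (p / 2)) * (2 * ((φ (z (p / 2)))⁻¹ * (1 / 2)))) p := by
      have := ((hu p hp).const_mul 2).exp
      simpa [mul_comm] using this
    have := (hasDerivAt_id p).fun_mul hE
    simp only [id_eq, one_mul] at this
    refine this.congr_deriv ?_
    have hpos := aux_phi_pos hφ (z (p / 2))
    rw [hD1]
    field_simp
  -- second derivative: deriv of L₂ agrees with D1 near p
  intro p hp
  have hmem : Set.Ioo (0:ℝ) 1 ∈ nhds p := isOpen_Ioo.mem_nhds hp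
  have hev : deriv (fun q : ℝ => q * Real.exp (2 * z (q / 2))) =ᶠ[nhds p] D1 := by
    filter_upwards [hmem] with q hq
    exact (hL1 q hq).deriv
  have hdd : deriv (deriv (fun q : ℝ => q * Real.exp (2 * z (q / 2)))) p = deriv D1 p :=
    hev.deriv_eq
  -- compute deriv D1 p
  have hpos := aux_phi_pos hφ (z (p / 2))
  have hpne : φ (z (p / 2)) ≠ 0 := ne_of_gt hpos
  obtain ⟨hp0, hp1⟩ := hp
  -- derivative of φ(z(q/2))
  have hw : HasDerivAt (fun q : ℝ => φ (z (q / 2)))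
      (-(z (p / 2)) * φ (z (p / 2)) * ((φ (z (p / 2)))⁻¹ * (1 / 2))) p :=
    (aux_phi_deriv hφ (z (p / 2))).comp p (hu p ⟨hp0, hp1⟩)
  have hinv : HasDerivAt (fun q : ℝ => (φ (z (q / 2)))⁻¹)
      (-(-(z (p / 2)) * φ (z (p / 2)) * ((φ (z (p / 2)))⁻¹ * (1 / 2))) / (φ (z (p / 2))) ^ 2)
      p := hw.inv hpne
  have hv := ((hasDerivAt_id p).fun_mul hinv).const_add 1
  simp only [id_eq, one_mul] at hv
  have hE : HasDerivAt (fun q : ℝ => Real.exp (2 * z (q / 2)))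
      (Real.exp (2 * z (p / 2)) * (2 * ((φ (z (p / 2)))⁻¹ * (1 / 2)))) p := by
    have := ((hu p ⟨hp0, hp1⟩).const_mul 2).exp
    simpa [mul_comm] using this
  have hD1' := hE.fun_mul hv
  have hderivD1 := hD1'.deriv
  rw [hdd]
  have hkey : deriv D1 p =
      Real.exp (2 * z (p / 2)) * (4 * φ (z (p / 2)) + p * (2 + z (p / 2)))
        / (2 * (φ (z (p / 2))) ^ 2) := by
    rw [hD1]
    rw [hderivD1]
    field_simp
    ring
  constructor
  · rw [hkey]
    field_simp
    ring
  · intro hposnum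
    rw [hkey]
    positivity
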